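/- Define the Bregman divergence of the negative Shannon entropy scaled by β > 0: for probability distributions p, q on finite V with all entries positive, D(q, p) = β ∑_{i∈V} (q(i) ln(q(i)/p(i)) + p(i) − q(i)). Then for any loss vector ℓ : V → ℝ, ⟨ℓ, p − q⟩ − D(q, p) ≤ β · ∑_{i∈V} p(i) · ξ(ℓ(i)/β), where ξ(x) = exp(−x) + x − 1. -/

import Mathlib

theorem breg_shannon_bound {V : Type*} [Fintype V] (β : ℝ) (hβ : 0 < β)
    (p q : V → ℝ) (hp : ∀ i, 0 < p i) (hq : ∀ i, 0 < q i)
    (hps : ∑ i, p i = 1) (hqs : ∑ i, q i = 1) (ℓ : V → ℝ) :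
    (∑ i, ℓ i * (p i - q i)) -
        β * ∑ i, (q i * Real.log (q i / p i) + p i - q i) ≤
      β * ∑ i, p i * (Real.exp (-(ℓ i / β)) + ℓ i / β - 1) := by
  rw [Finset.mul_sum, Finset.mul_sum, ← Finset.sum_sub_distrib]
  apply Finset.sum_le_sum
  intro i _
  have hpi := hp i
  have hqi := hq i
  set t := ℓ i / β with ht
  set L := Real.log (q i / p i) with hL
  have h1 : 1 - (t + L) ≤ Real.exp (-(t + L)) := by
    linarith [Real.add_one_le_exp (-(t + L))]
  have h2 : Real.exp (-(t + L)) = Real.exp (-t) * (p i / q i) := by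
    rw [neg_add, Real.exp_add]
    congr 1
    rw [Real.exp_neg, Real.exp_log (div_pos hqi hpi), inv_div]
  have h3 : q i * (1 - (t + L)) ≤ p i * Real.exp (-t) := by
    calc q i * (1 - (t + L)) ≤ q i * Real.exp (-(t + L)) := by
          exact mul_le_mul_of_nonneg_left h1 hqi.le
      _ = p i * Real.exp (-t) := by
          rw [h2]; field_simp
  have hℓ : ℓ i = β * t := by rw [ht, mul_div_assoc', mul_div_cancel_left₀ _ hβ.ne']
  nlinarith [mul_le_mul_of_nonneg_left h3 hβ.le]
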